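/- Let G1 and G2 be finite simple cubic graphs, let v1 be a vertex of G1 and v2 a vertex of G2, and let f be a bijection from the neighborhood of v1 to the neighborhood of v2. Suppose G1 has exactly a1 proper 3-edge colorings counted up to permutation of the colors, and G2 has exactly a2 proper 3-edge colorings counted up to permutation of the colors. Then the Y-join of G1 and G2 (formed using v1, v2, f) has exactly a1·a2 proper 3-edge colorings counted up to permutation of the colors. -/

import Mathlib

/-- A cubic graph: every vertex has exactly 3 neighbors (3-regular). -/
def IsCubic {V : Type} (G : SimpleGraph V) : Prop := ∀ v : V, (G.neighborSet v).ncard = 3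

/-- A proper 3-edge coloring: a function from the edge set to 3 colors such that
distinct edges sharing a vertex receive different colors. -/
def IsProper3EdgeColoring {V : Type} (G : SimpleGraph V) (c : G.edgeSet → Fin 3) : Prop :=
  ∀ e₁ e₂ : G.edgeSet, e₁ ≠ e₂ →
    (∃ v : V, v ∈ (e₁ : Sym2 V) ∧ v ∈ (e₂ : Sym2 V)) → c e₁ ≠ c e₂

/-- Proper 3-edge colorings up to permutation of the colors. -/
def edgeColoringSetoid {V : Type} (G : SimpleGraph V) :
    Setoid {c : G.edgeSet → Fin 3 // IsProper3EdgeColoring G c} where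
  r c₁ c₂ := ∃ σ : Equiv.Perm (Fin 3), ∀ e, σ (c₁.1 e) = c₂.1 e
  iseqv := by
    constructor
    · exact fun c => ⟨Equiv.refl _, fun e => rfl⟩
    · rintro c₁ c₂ ⟨σ, h⟩
      exact ⟨σ.symm, fun e => by rw [← h e, Equiv.symm_apply_apply]⟩
    · rintro c₁ c₂ c₃ ⟨σ, h⟩ ⟨τ, h'⟩
      exact ⟨σ.trans τ, fun e => by rw [Equiv.trans_apply, h e, h' e]⟩

/-- The Y-join of two cubic graphs `G₁`, `G₂` with respect to vertices `v₁`, `v₂` and a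
bijection `f` between their neighborhoods: delete `v₁` and `v₂` and join each neighbor
`u` of `v₁` to `f u` by a matching edge. -/
def YJoin {V₁ V₂ : Type} (G₁ : SimpleGraph V₁) (G₂ : SimpleGraph V₂) (v₁ : V₁) (v₂ : V₂)
    (f : G₁.neighborSet v₁ ≃ G₂.neighborSet v₂) :
    SimpleGraph ({x : V₁ // x ≠ v₁} ⊕ {y : V₂ // y ≠ v₂}) where
  Adj p q :=
    match p, q with
    | Sum.inl a, Sum.inl b => G₁.Adj a.1 b.1
    | Sum.inr a, Sum.inr b => G₂.Adj a.1 b.1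
    | Sum.inl a, Sum.inr b => ∃ h : a.1 ∈ G₁.neighborSet v₁, (f ⟨a.1, h⟩ : V₂) = b.1
    | Sum.inr b, Sum.inl a => ∃ h : a.1 ∈ G₁.neighborSet v₁, (f ⟨a.1, h⟩ : V₂) = b.1
  symm := by
    constructor
    rintro (a | a) (b | b) h
    · exact G₁.adj_symm h
    · exact h
    · exact h
    · exact G₂.adj_symm h
  loopless := by
    constructor
    rintro (a | a) h
    · exact G₁.irrefl h
    · exact G₂.irrefl h

namespace YJP

open SimpleGraph

variable {V : Type} {G : SimpleGraph V}

/-- evaluate a coloring on an adjacency -/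
def ev (c : G.edgeSet → Fin 3) {x y : V} (h : G.Adj x y) : Fin 3 := c ⟨s(x,y), h⟩

lemma ev_congr (c : G.edgeSet → Fin 3) {x y x' y' : V} (h : G.Adj x y) (h' : G.Adj x' y')
    (hEq : s(x,y) = s(x',y')) : ev c h = ev c h' := by
  unfold ev; congr 1; exact Subtype.ext hEq

lemma ev_eq (c : G.edgeSet → Fin 3) (e : G.edgeSet) {x y : V} (h : G.Adj x y)
    (he : (e : Sym2 V) = s(x,y)) : c e = ev c h := by
  unfold ev
  congr 1
  exact Subtype.ext he

lemma proper_ev {c : G.edgeSet → Fin 3} (hc : IsProper3EdgeColoring G c)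
    {x y z : V} (hy : G.Adj x y) (hz : G.Adj x z) (hne : y ≠ z) :
    ev c hy ≠ ev c hz := by
  apply hc
  · intro hEq
    have h2 : s(x,y) = s(x,z) := congrArg Subtype.val hEq
    rw [Sym2.eq_iff] at h2
    rcases h2 with ⟨-, h⟩ | ⟨h1, h2⟩
    · exact hne h
    · exact hne (h2.trans h1)
  · exact ⟨x, Sym2.mem_mk_left _ _, Sym2.mem_mk_left _ _⟩

open Classical in
/-- build a coloring from a function on adjacencies -/
noncomputable def mkCol (d : ∀ ⦃x y : V⦄, G.Adj x y → Fin 3)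
    (hsymm : ∀ ⦃x y : V⦄ (h : G.Adj x y), d h = d h.symm) :
    G.edgeSet → Fin 3 := fun e =>
  Sym2.lift ⟨fun x y => if h : G.Adj x y then d h else 0, by
    intro x y
    dsimp only
    by_cases h : G.Adj x y
    · rw [dif_pos h, dif_pos h.symm, hsymm]
    · rw [dif_neg h, dif_neg (fun h' : G.Adj y x => h h'.symm)]⟩ e.1

lemma ev_mkCol (d : ∀ ⦃x y : V⦄, G.Adj x y → Fin 3)
    (hsymm : ∀ ⦃x y : V⦄ (h : G.Adj x y), d h = d h.symm)
    {x y : V} (h : G.Adj x y) : ev (mkCol d hsymm) h = d h := by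
  unfold ev mkCol
  simp only [Sym2.lift_mk]
  exact dif_pos h

lemma mkCol_proper (d : ∀ ⦃x y : V⦄, G.Adj x y → Fin 3)
    (hsymm : ∀ ⦃x y : V⦄ (h : G.Adj x y), d h = d h.symm)
    (hd : ∀ ⦃x y z : V⦄ (hy : G.Adj x y) (hz : G.Adj x z), y ≠ z → d hy ≠ d hz) :
    IsProper3EdgeColoring G (mkCol d hsymm) := by
  intro e₁ e₂ hne hsh
  obtain ⟨v, hv1, hv2⟩ := hsh
  have he₁ : (e₁ : Sym2 V) = s(v, Sym2.Mem.other hv1) := (Sym2.other_spec hv1).symm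
  have he₂ : (e₂ : Sym2 V) = s(v, Sym2.Mem.other hv2) := (Sym2.other_spec hv2).symm
  have h₁ : G.Adj v (Sym2.Mem.other hv1) := by rw [← G.mem_edgeSet, ← he₁]; exact e₁.2
  have h₂ : G.Adj v (Sym2.Mem.other hv2) := by rw [← G.mem_edgeSet, ← he₂]; exact e₂.2
  rw [ev_eq (mkCol d hsymm) e₁ h₁ he₁, ev_eq (mkCol d hsymm) e₂ h₂ he₂, ev_mkCol, ev_mkCol]
  apply hd
  intro ho
  apply hne
  apply Subtype.ext
  rw [he₁, he₂, ho]

lemma proper_perm {c : G.edgeSet → Fin 3} (hc : IsProper3EdgeColoring G c)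
    (σ : Equiv.Perm (Fin 3)) : IsProper3EdgeColoring G (fun e => σ (c e)) :=
  fun e₁ e₂ hne hsh hEq => hc e₁ e₂ hne hsh (σ.injective hEq)

/-- the colors seen at a vertex, as a function on the neighbor set -/
def colorAt (c : G.edgeSet → Fin 3) (w : V) (u : G.neighborSet w) : Fin 3 :=
  ev c (u.2 : G.Adj w u.1)

lemma colorAt_injective {c : G.edgeSet → Fin 3} (hc : IsProper3EdgeColoring G c) (w : V) :
    Function.Injective (colorAt c w) := by
  intro u u' hEq
  by_contra hne
  exact proper_ev hc (u.2 : G.Adj w u.1) (u'.2 : G.Adj w u'.1)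
    (fun h => hne (Subtype.ext h)) hEq

lemma colorAt_bijective [Finite V] {c : G.edgeSet → Fin 3} (hc : IsProper3EdgeColoring G c)
    {w : V} (hreg : (G.neighborSet w).ncard = 3) :
    Function.Bijective (colorAt c w) := by
  rw [Nat.bijective_iff_injective_and_card]
  refine ⟨colorAt_injective hc w, ?_⟩
  rw [Nat.card_coe_set_eq, hreg, Nat.card_eq_fintype_card, Fintype.card_fin]

lemma uniq_neighbor {c : G.edgeSet → Fin 3} (hc : IsProper3EdgeColoring G c)
    {w u u' : V} (h1 : G.Adj w u) (h2 : G.Adj w u') (hEq : ev c h1 = ev c h2) : u = u' :=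
  congrArg Subtype.val
    (colorAt_injective hc w (a₁ := ⟨u, h1⟩) (a₂ := ⟨u', h2⟩) hEq)

lemma col_rel_of_ev {c c' : G.edgeSet → Fin 3} (σ : Equiv.Perm (Fin 3))
    (h : ∀ (x y : V) (hxy : G.Adj x y), σ (ev c hxy) = ev c' hxy) :
    ∀ e, σ (c e) = c' e := by
  rintro ⟨e, he⟩
  revert he
  refine Sym2.ind (fun x y he => ?_) e
  exact h x y he

lemma col_eq_of_ev {c c' : G.edgeSet → Fin 3}
    (h : ∀ (x y : V) (hxy : G.Adj x y), ev c hxy = ev c' hxy) : c = c' := by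
  funext e
  have := col_rel_of_ev (Equiv.refl _) (c := c) (c' := c') (fun x y hxy => h x y hxy) e
  simpa using this

end YJP
namespace YJP

open SimpleGraph

variable {V₁ V₂ : Type} (G₁ : SimpleGraph V₁) (G₂ : SimpleGraph V₂)
  (v₁ : V₁) (v₂ : V₂) (f : G₁.neighborSet v₁ ≃ G₂.neighborSet v₂)

/-- the left endpoint of a cut edge -/
def bL (u : G₁.neighborSet v₁) : {x : V₁ // x ≠ v₁} :=
  ⟨u.1, ((u.2 : G₁.Adj v₁ u.1)).ne'⟩

/-- the right endpoint of a cut edge -/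
def bR (w : G₂.neighborSet v₂) : {y : V₂ // y ≠ v₂} :=
  ⟨w.1, ((w.2 : G₂.Adj v₂ w.1)).ne'⟩

lemma cut_adj (u : G₁.neighborSet v₁) :
    (YJoin G₁ G₂ v₁ v₂ f).Adj (Sum.inl (bL G₁ v₁ u)) (Sum.inr (bR G₂ v₂ (f u))) :=
  ⟨u.2, rfl⟩

/-- the colors of the three cut edges -/
def kap (c : (YJoin G₁ G₂ v₁ v₂ f).edgeSet → Fin 3) (u : G₁.neighborSet v₁) : Fin 3 :=
  ev c (cut_adj G₁ G₂ v₁ v₂ f u)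

open Classical in
/-- neighbors in the Y-join on the left side -/
noncomputable def nbhdL (a : {x : V₁ // x ≠ v₁}) :
    ((YJoin G₁ G₂ v₁ v₂ f).neighborSet (Sum.inl a)) ≃ (G₁.neighborSet a.1) where
  toFun := fun w => match w with
    | ⟨Sum.inl b, hw⟩ => ⟨b.1, (hw : G₁.Adj a.1 b.1)⟩
    | ⟨Sum.inr b, hw⟩ => ⟨v₁, by
        obtain ⟨h, -⟩ := (hw : ∃ h : a.1 ∈ G₁.neighborSet v₁, (f ⟨a.1, h⟩ : V₂) = b.1)
        exact G₁.adj_symm h⟩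
  invFun := fun u =>
    if h : u.1 = v₁ then
      ⟨Sum.inr (bR G₂ v₂ (f ⟨a.1, by have hu : G₁.Adj a.1 u.1 := u.2; rw [h] at hu; exact G₁.adj_symm hu⟩)),
        cut_adj G₁ G₂ v₁ v₂ f ⟨a.1, by have hu : G₁.Adj a.1 u.1 := u.2; rw [h] at hu; exact G₁.adj_symm hu⟩⟩
    else ⟨Sum.inl ⟨u.1, h⟩, (u.2 : G₁.Adj a.1 u.1)⟩
  left_inv := by
    rintro ⟨(b | b), hw⟩
    · have hb : b.1 ≠ v₁ := b.2
      simp only [dif_neg hb]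
    · obtain ⟨h, hfb⟩ := (hw : ∃ h : a.1 ∈ G₁.neighborSet v₁, (f ⟨a.1, h⟩ : V₂) = b.1)
      simp only [dif_pos rfl]
      apply Subtype.ext
      show Sum.inr _ = Sum.inr b
      exact congrArg Sum.inr (Subtype.ext hfb)
  right_inv := by
    intro u
    by_cases h : u.1 = v₁
    · simp only [dif_pos h]
      exact Subtype.ext h.symm
    · simp only [dif_neg h]
end YJP
namespace YJP

open SimpleGraph

variable {V₁ V₂ : Type} (G₁ : SimpleGraph V₁) (G₂ : SimpleGraph V₂)
  (v₁ : V₁) (v₂ : V₂) (f : G₁.neighborSet v₁ ≃ G₂.neighborSet v₂)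

open Classical in
/-- neighbors in the Y-join on the right side -/
noncomputable def nbhdR (b : {y : V₂ // y ≠ v₂}) :
    ((YJoin G₁ G₂ v₁ v₂ f).neighborSet (Sum.inr b)) ≃ (G₂.neighborSet b.1) where
  toFun := fun w => match w with
    | ⟨Sum.inr b', hw⟩ => ⟨b'.1, (hw : G₂.Adj b.1 b'.1)⟩
    | ⟨Sum.inl a, hw⟩ => ⟨v₂, by
        obtain ⟨h, hfb⟩ := (hw : ∃ h : a.1 ∈ G₁.neighborSet v₁, (f ⟨a.1, h⟩ : V₂) = b.1)
        have := (f ⟨a.1, h⟩).2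
        rw [hfb] at this
        exact G₂.adj_symm this⟩
  invFun := fun u =>
    if h : u.1 = v₂ then
      ⟨Sum.inl (bL G₁ v₁ (f.symm ⟨b.1, by have hu : G₂.Adj b.1 u.1 := u.2; rw [h] at hu; exact G₂.adj_symm hu⟩)),
        by
          refine ⟨(f.symm ⟨b.1, _⟩).2, ?_⟩
          have := congrArg Subtype.val
            (f.apply_symm_apply ⟨b.1, by have hu : G₂.Adj b.1 u.1 := u.2; rw [h] at hu; exact G₂.adj_symm hu⟩)
          exact this⟩
    else ⟨Sum.inr ⟨u.1, h⟩, (u.2 : G₂.Adj b.1 u.1)⟩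
  left_inv := by
    rintro ⟨(a | b'), hw⟩
    · obtain ⟨h, hfb⟩ := (hw : ∃ h : a.1 ∈ G₁.neighborSet v₁, (f ⟨a.1, h⟩ : V₂) = b.1)
      simp only [dif_pos rfl]
      apply Subtype.ext
      show Sum.inl _ = Sum.inl a
      have key : ∀ (hb : b.1 ∈ G₂.neighborSet v₂), (f.symm ⟨b.1, hb⟩ : V₁) = a.1 := by
        intro hb
        have hh : (⟨b.1, hb⟩ : G₂.neighborSet v₂) = f ⟨a.1, h⟩ := Subtype.ext hfb.symm
        rw [hh, f.symm_apply_apply]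
      exact congrArg Sum.inl (Subtype.ext (key _))
    · have hb : b'.1 ≠ v₂ := b'.2
      simp only [dif_neg hb]
  right_inv := by
    intro u
    by_cases h : u.1 = v₂
    · simp only [dif_pos h]
      exact Subtype.ext h.symm
    · simp only [dif_neg h]

lemma Y_cubic (hcubic₁ : IsCubic G₁) (hcubic₂ : IsCubic G₂) :
    IsCubic (YJoin G₁ G₂ v₁ v₂ f) := by
  intro w
  cases w with
  | inl a =>
    rw [← Nat.card_coe_set_eq, Nat.card_congr (nbhdL G₁ G₂ v₁ v₂ f a),
      Nat.card_coe_set_eq]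
    exact hcubic₁ a.1
  | inr b =>
    rw [← Nat.card_coe_set_eq, Nat.card_congr (nbhdR G₁ G₂ v₁ v₂ f b),
      Nat.card_coe_set_eq]
    exact hcubic₂ b.1

lemma cardA_odd [Fintype V₁] (hcubic₁ : IsCubic G₁) :
    Odd (Nat.card {x : V₁ // x ≠ v₁}) := by
  classical
  have hdeg : ∀ v, G₁.degree v = 3 := by
    intro v
    rw [← card_neighborSet_eq_degree, ← Nat.card_eq_fintype_card, Nat.card_coe_set_eq]
    exact hcubic₁ v
  have hsum := G₁.sum_degrees_eq_twice_card_edges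
  rw [Finset.sum_congr rfl (fun v _ => hdeg v), Finset.sum_const, Finset.card_univ,
    smul_eq_mul] at hsum
  have heven : Even (Fintype.card V₁) := by
    rcases Nat.even_mul.mp (⟨G₁.edgeFinset.card, by omega⟩ : Even (Fintype.card V₁ * 3)) with h | h
    · exact h
    · exact absurd h (by decide)
  have hA : Nat.card {x : V₁ // x ≠ v₁} = Fintype.card V₁ - 1 := by
    rw [Nat.card_eq_fintype_card, Fintype.card_subtype_compl, Fintype.card_subtype_eq]
  have hpos : 1 ≤ Fintype.card V₁ := Fintype.card_pos_iff.mpr ⟨v₁⟩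
  obtain ⟨r, hr⟩ := heven
  exact ⟨r - 1, by omega⟩
end YJP
namespace YJP

open SimpleGraph

variable {V₁ V₂ : Type} (G₁ : SimpleGraph V₁) (G₂ : SimpleGraph V₂)
  (v₁ : V₁) (v₂ : V₂) (f : G₁.neighborSet v₁ ≃ G₂.neighborSet v₂)

/-- auxiliary: the matching edge through a left vertex -/
def mEdge (p : {x : V₁ // x ≠ v₁} → {x : V₁ // x ≠ v₁}) (a : {x : V₁ // x ≠ v₁}) :
    Sym2 ({x : V₁ // x ≠ v₁} ⊕ {y : V₂ // y ≠ v₂}) :=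
  s(Sum.inl a, Sum.inl (p a))

lemma kap_injective [Fintype V₁] [Fintype V₂]
    (hcubic₁ : IsCubic G₁) (hcubic₂ : IsCubic G₂)
    {c : (YJoin G₁ G₂ v₁ v₂ f).edgeSet → Fin 3}
    (hc : IsProper3EdgeColoring (YJoin G₁ G₂ v₁ v₂ f) c) :
    Function.Injective (kap G₁ G₂ v₁ v₂ f c) := by
  classical
  letI : DecidableEq (Sym2 ({x : V₁ // x ≠ v₁} ⊕ {y : V₂ // y ≠ v₂})) := Classical.decEq _
  have hY := Y_cubic G₁ G₂ v₁ v₂ f hcubic₁ hcubic₂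
  by_contra hinj
  have hcard : Nat.card (G₁.neighborSet v₁) = Nat.card (Fin 3) := by
    rw [Nat.card_coe_set_eq, hcubic₁ v₁, Nat.card_eq_fintype_card, Fintype.card_fin]
  have hnsurj : ¬ Function.Surjective (kap G₁ G₂ v₁ v₂ f c) := fun hs =>
    hinj ((Nat.bijective_iff_surjective_and_card _).mpr ⟨hs, hcard⟩).injective
  simp only [Function.Surjective, not_forall, not_exists] at hnsurj
  obtain ⟨k, hk⟩ := hnsurj
  -- every left vertex has its color-k edge going to another left vertex
  have exA : ∀ a : {x : V₁ // x ≠ v₁}, ∃ a' : {x : V₁ // x ≠ v₁},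
      ∃ h : (YJoin G₁ G₂ v₁ v₂ f).Adj (Sum.inl a) (Sum.inl a'), ev c h = k := by
    intro a
    obtain ⟨⟨w, hw⟩, hu⟩ := (colorAt_bijective hc (hY (Sum.inl a))).surjective k
    cases w with
    | inl b => exact ⟨b, hw, hu⟩
    | inr b =>
      exfalso
      have hw' : ∃ h : a.1 ∈ G₁.neighborSet v₁, (f ⟨a.1, h⟩ : V₂) = b.1 := hw
      obtain ⟨h, hfb⟩ := hw'
      apply hk ⟨a.1, h⟩
      rw [← hu]
      have hb : bR G₂ v₂ (f ⟨a.1, h⟩) = b := Subtype.ext hfb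
      have hadj2 : (YJoin G₁ G₂ v₁ v₂ f).Adj (Sum.inl a) (Sum.inr b) := hw
      refine ev_congr c (cut_adj G₁ G₂ v₁ v₂ f ⟨a.1, h⟩) hadj2 ?_
      show s(Sum.inl (bL G₁ v₁ ⟨a.1, h⟩), Sum.inr (bR G₂ v₂ (f ⟨a.1, h⟩)))
        = s(Sum.inl a, Sum.inr b)
      rw [hb]
      rfl
  choose p hadj hcol using exA
  -- the color-k matching is an involution
  have hne_p : ∀ a, a ≠ p a := fun a h =>
    (hadj a).ne (congrArg Sum.inl h)
  have hpp : ∀ a, p (p a) = a := by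
    intro a
    have h1 : (YJoin G₁ G₂ v₁ v₂ f).Adj (Sum.inl (p a)) (Sum.inl a) := (hadj a).symm
    have e1 : ev c h1 = k := by
      rw [ev_congr c h1 (hadj a) (Sym2.eq_swap)]
      exact hcol a
    have h2 := uniq_neighbor hc h1 (hadj (p a)) (e1.trans (hcol (p a)).symm)
    exact (Sum.inl.inj h2).symm
  -- double counting : the left side has even cardinality
  have hfib : ∀ a : {x : V₁ // x ≠ v₁},
      Finset.univ.filter (fun b => mEdge v₁ v₂ p b = mEdge v₁ v₂ p a) = {a, p a} := by
    intro a
    ext b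
    simp only [Finset.mem_filter, Finset.mem_univ, true_and, Finset.mem_insert,
      Finset.mem_singleton]
    constructor
    · intro hEq
      have hmem : (Sum.inl b : {x : V₁ // x ≠ v₁} ⊕ {y : V₂ // y ≠ v₂})
          ∈ mEdge v₁ v₂ p a := hEq ▸ Sym2.mem_mk_left _ _
      rw [mEdge, Sym2.mem_iff] at hmem
      rcases hmem with h | h
      · exact Or.inl (Sum.inl.inj h)
      · exact Or.inr (Sum.inl.inj h)
    · rintro (rfl | rfl)
      · rfl
      · show mEdge v₁ v₂ p (p a) = mEdge v₁ v₂ p a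
        rw [mEdge, mEdge, hpp a, Sym2.eq_swap]
  have hcount := Finset.card_eq_sum_card_fiberwise
    (f := mEdge v₁ v₂ p)
    (s := Finset.univ)
    (t := Finset.univ.image (mEdge v₁ v₂ p))
    (fun x _ => Finset.mem_image_of_mem _ (Finset.mem_univ x))
  have heven : Even ((Finset.univ : Finset {x : V₁ // x ≠ v₁}).card) := by
    rw [hcount]
    have h2 : ∀ e ∈ Finset.univ.image (mEdge v₁ v₂ p),
        (Finset.univ.filter (fun b : {x : V₁ // x ≠ v₁} => mEdge v₁ v₂ p b = e)).card = 2 := by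
      intro e he
      obtain ⟨a, -, rfl⟩ := Finset.mem_image.mp he
      rw [hfib a]
      exact Finset.card_pair (hne_p a)
    rw [Finset.sum_congr rfl h2, Finset.sum_const, smul_eq_mul]
    exact even_two.mul_left _
  have hodd := cardA_odd G₁ v₁ hcubic₁
  rw [Nat.card_eq_fintype_card, ← Finset.card_univ] at hodd
  exact (Nat.not_odd_iff_even.mpr heven) hodd
end YJP
namespace YJP

open SimpleGraph

variable {V₁ V₂ : Type} (G₁ : SimpleGraph V₁) (G₂ : SimpleGraph V₂)
  (v₁ : V₁) (v₂ : V₂) (f : G₁.neighborSet v₁ ≃ G₂.neighborSet v₂)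

open Classical in
/-- restriction of a Y-join coloring to `G₁` -/
noncomputable def d1 (c : (YJoin G₁ G₂ v₁ v₂ f).edgeSet → Fin 3) :
    ∀ ⦃x y : V₁⦄, G₁.Adj x y → Fin 3 := fun x y h =>
  if hx : x = v₁ then kap G₁ G₂ v₁ v₂ f c ⟨y, by rw [← hx]; exact h⟩
  else if hy : y = v₁ then kap G₁ G₂ v₁ v₂ f c ⟨x, by rw [← hy]; exact h.symm⟩
  else ev c (show (YJoin G₁ G₂ v₁ v₂ f).Adj (Sum.inl ⟨x, hx⟩) (Sum.inl ⟨y, hy⟩) from h)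

lemma d1_symm (c : (YJoin G₁ G₂ v₁ v₂ f).edgeSet → Fin 3) :
    ∀ ⦃x y : V₁⦄ (h : G₁.Adj x y), d1 G₁ G₂ v₁ v₂ f c h = d1 G₁ G₂ v₁ v₂ f c h.symm := by
  intro x y h
  unfold d1
  by_cases hx : x = v₁
  · have hy : y ≠ v₁ := fun hy => (G₁.irrefl : ¬ G₁.Adj v₁ v₁) (by rw [hx] at h; rw [hy] at h; exact h)
    rw [dif_pos hx, dif_neg hy, dif_pos hx]
  · by_cases hy : y = v₁
    · rw [dif_neg hx, dif_pos hy, dif_pos hy]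
    · rw [dif_neg hx, dif_neg hy, dif_neg hy, dif_neg hx]
      exact ev_congr c _ _ (Sym2.eq_swap)

lemma d1_proper [Fintype V₁] [Fintype V₂] (hcubic₁ : IsCubic G₁) (hcubic₂ : IsCubic G₂)
    {c : (YJoin G₁ G₂ v₁ v₂ f).edgeSet → Fin 3}
    (hc : IsProper3EdgeColoring (YJoin G₁ G₂ v₁ v₂ f) c) :
    ∀ ⦃x y z : V₁⦄ (hy : G₁.Adj x y) (hz : G₁.Adj x z), y ≠ z →
      d1 G₁ G₂ v₁ v₂ f c hy ≠ d1 G₁ G₂ v₁ v₂ f c hz := by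
  intro x y z hy hz hne
  unfold d1
  by_cases hx : x = v₁
  · rw [dif_pos hx, dif_pos hx]
    intro hEq
    have := kap_injective G₁ G₂ v₁ v₂ f hcubic₁ hcubic₂ hc hEq
    exact hne (congrArg Subtype.val this)
  · by_cases hy' : y = v₁
    · have hz' : z ≠ v₁ := fun h => hne (hy'.trans h.symm)
      rw [dif_neg hx, dif_pos hy', dif_neg hx, dif_neg hz']
      -- cut edge at x  vs  internal edge x-z
      have hcut : (YJoin G₁ G₂ v₁ v₂ f).Adj (Sum.inl ⟨x, hx⟩)
          (Sum.inr (bR G₂ v₂ (f ⟨x, by rw [← hy']; exact hy.symm⟩))) :=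
        cut_adj G₁ G₂ v₁ v₂ f ⟨x, by rw [← hy']; exact hy.symm⟩
      have h1 : kap G₁ G₂ v₁ v₂ f c ⟨x, by rw [← hy']; exact hy.symm⟩ = ev c hcut := rfl
      rw [h1]
      exact proper_ev hc hcut
        (show (YJoin G₁ G₂ v₁ v₂ f).Adj (Sum.inl ⟨x, hx⟩) (Sum.inl ⟨z, hz'⟩) from hz)
        (by simp)
    · by_cases hz' : z = v₁
      · rw [dif_neg hx, dif_neg hy', dif_neg hx, dif_pos hz']
        have hcut : (YJoin G₁ G₂ v₁ v₂ f).Adj (Sum.inl ⟨x, hx⟩)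
            (Sum.inr (bR G₂ v₂ (f ⟨x, by rw [← hz']; exact hz.symm⟩))) :=
          cut_adj G₁ G₂ v₁ v₂ f ⟨x, by rw [← hz']; exact hz.symm⟩
        have h1 : kap G₁ G₂ v₁ v₂ f c ⟨x, by rw [← hz']; exact hz.symm⟩ = ev c hcut := rfl
        rw [h1]
        exact proper_ev hc
          (show (YJoin G₁ G₂ v₁ v₂ f).Adj (Sum.inl ⟨x, hx⟩) (Sum.inl ⟨y, hy'⟩) from hy)
          hcut (by simp)
      · rw [dif_neg hx, dif_neg hy', dif_neg hx, dif_neg hz']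
        exact proper_ev hc _ _ (by simp [hne])

/-- restriction to G₁, as a proper coloring -/
noncomputable def restrict₁ [Fintype V₁] [Fintype V₂]
    (hcubic₁ : IsCubic G₁) (hcubic₂ : IsCubic G₂)
    (c : {c : (YJoin G₁ G₂ v₁ v₂ f).edgeSet → Fin 3 //
      IsProper3EdgeColoring (YJoin G₁ G₂ v₁ v₂ f) c}) :
    {c : G₁.edgeSet → Fin 3 // IsProper3EdgeColoring G₁ c} :=
  ⟨mkCol (d1 G₁ G₂ v₁ v₂ f c.1) (d1_symm G₁ G₂ v₁ v₂ f c.1),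
    mkCol_proper _ _ (d1_proper G₁ G₂ v₁ v₂ f hcubic₁ hcubic₂ c.2)⟩

lemma ev_restrict₁_ne [Fintype V₁] [Fintype V₂]
    (hcubic₁ : IsCubic G₁) (hcubic₂ : IsCubic G₂) (c) {x y : V₁} (h : G₁.Adj x y)
    (hx : x ≠ v₁) (hy : y ≠ v₁) :
    ev (restrict₁ G₁ G₂ v₁ v₂ f hcubic₁ hcubic₂ c).1 h =
      ev c.1 (show (YJoin G₁ G₂ v₁ v₂ f).Adj (Sum.inl ⟨x, hx⟩) (Sum.inl ⟨y, hy⟩) from h) := by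
  show ev (mkCol (d1 G₁ G₂ v₁ v₂ f c.1) (d1_symm G₁ G₂ v₁ v₂ f c.1)) h = _
  rw [ev_mkCol]
  unfold d1
  rw [dif_neg hx, dif_neg hy]

lemma ev_restrict₁_v₁ [Fintype V₁] [Fintype V₂]
    (hcubic₁ : IsCubic G₁) (hcubic₂ : IsCubic G₂) (c) {y : V₁} (h : G₁.Adj v₁ y) :
    ev (restrict₁ G₁ G₂ v₁ v₂ f hcubic₁ hcubic₂ c).1 h =
      kap G₁ G₂ v₁ v₂ f c.1 ⟨y, h⟩ := by
  show ev (mkCol (d1 G₁ G₂ v₁ v₂ f c.1) (d1_symm G₁ G₂ v₁ v₂ f c.1)) h = _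
  rw [ev_mkCol]
  unfold d1
  rw [dif_pos rfl]

end YJP
namespace YJP

open SimpleGraph

variable {V₁ V₂ : Type} (G₁ : SimpleGraph V₁) (G₂ : SimpleGraph V₂)
  (v₁ : V₁) (v₂ : V₂) (f : G₁.neighborSet v₁ ≃ G₂.neighborSet v₂)

lemma cut_adj' (u : G₁.neighborSet v₁) {x : V₂} (hx : x ≠ v₂) (hval : (f u : V₂) = x) :
    (YJoin G₁ G₂ v₁ v₂ f).Adj (Sum.inr ⟨x, hx⟩) (Sum.inl (bL G₁ v₁ u)) :=
  ⟨u.2, hval⟩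

lemma kap_eq_ev_inr (c : (YJoin G₁ G₂ v₁ v₂ f).edgeSet → Fin 3)
    (u : G₁.neighborSet v₁) {x : V₂} (hx : x ≠ v₂) (hval : (f u : V₂) = x) :
    kap G₁ G₂ v₁ v₂ f c u = ev c (cut_adj' G₁ G₂ v₁ v₂ f u hx hval) := by
  unfold kap
  refine ev_congr c _ _ ?_
  rw [Sym2.eq_swap]
  rw [show (bR G₂ v₂ (f u)) = ⟨x, hx⟩ from Subtype.ext hval]

open Classical in
/-- restriction of a Y-join coloring to `G₂` -/
noncomputable def d2 (c : (YJoin G₁ G₂ v₁ v₂ f).edgeSet → Fin 3) :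
    ∀ ⦃x y : V₂⦄, G₂.Adj x y → Fin 3 := fun x y h =>
  if hx : x = v₂ then kap G₁ G₂ v₁ v₂ f c (f.symm ⟨y, by rw [← hx]; exact h⟩)
  else if hy : y = v₂ then kap G₁ G₂ v₁ v₂ f c (f.symm ⟨x, by rw [← hy]; exact h.symm⟩)
  else ev c (show (YJoin G₁ G₂ v₁ v₂ f).Adj (Sum.inr ⟨x, hx⟩) (Sum.inr ⟨y, hy⟩) from h)

lemma d2_symm (c : (YJoin G₁ G₂ v₁ v₂ f).edgeSet → Fin 3) :
    ∀ ⦃x y : V₂⦄ (h : G₂.Adj x y), d2 G₁ G₂ v₁ v₂ f c h = d2 G₁ G₂ v₁ v₂ f c h.symm := by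
  intro x y h
  unfold d2
  by_cases hx : x = v₂
  · have hy : y ≠ v₂ := fun hy => (G₂.irrefl : ¬ G₂.Adj v₂ v₂) (by rw [hx] at h; rw [hy] at h; exact h)
    rw [dif_pos hx, dif_neg hy, dif_pos hx]
  · by_cases hy : y = v₂
    · rw [dif_neg hx, dif_pos hy, dif_pos hy]
    · rw [dif_neg hx, dif_neg hy, dif_neg hy, dif_neg hx]
      exact ev_congr c _ _ (Sym2.eq_swap)

lemma d2_proper [Fintype V₁] [Fintype V₂] (hcubic₁ : IsCubic G₁) (hcubic₂ : IsCubic G₂)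
    {c : (YJoin G₁ G₂ v₁ v₂ f).edgeSet → Fin 3}
    (hc : IsProper3EdgeColoring (YJoin G₁ G₂ v₁ v₂ f) c) :
    ∀ ⦃x y z : V₂⦄ (hy : G₂.Adj x y) (hz : G₂.Adj x z), y ≠ z →
      d2 G₁ G₂ v₁ v₂ f c hy ≠ d2 G₁ G₂ v₁ v₂ f c hz := by
  intro x y z hy hz hne
  unfold d2
  by_cases hx : x = v₂
  · rw [dif_pos hx, dif_pos hx]
    intro hEq
    have h2 := kap_injective G₁ G₂ v₁ v₂ f hcubic₁ hcubic₂ hc hEq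
    have h3 := f.symm.injective h2
    exact hne (congrArg Subtype.val h3)
  · by_cases hy' : y = v₂
    · have hz' : z ≠ v₂ := fun h => hne (hy'.trans h.symm)
      rw [dif_neg hx, dif_pos hy', dif_neg hx, dif_neg hz']
      rw [kap_eq_ev_inr G₁ G₂ v₁ v₂ f c _ hx
        (congrArg Subtype.val (f.apply_symm_apply ⟨x, by rw [← hy']; exact hy.symm⟩))]
      exact proper_ev hc _
        (show (YJoin G₁ G₂ v₁ v₂ f).Adj (Sum.inr ⟨x, hx⟩) (Sum.inr ⟨z, hz'⟩) from hz)
        (by simp)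
    · by_cases hz' : z = v₂
      · rw [dif_neg hx, dif_neg hy', dif_neg hx, dif_pos hz']
        rw [kap_eq_ev_inr G₁ G₂ v₁ v₂ f c _ hx
          (congrArg Subtype.val (f.apply_symm_apply ⟨x, by rw [← hz']; exact hz.symm⟩))]
        exact proper_ev hc
          (show (YJoin G₁ G₂ v₁ v₂ f).Adj (Sum.inr ⟨x, hx⟩) (Sum.inr ⟨y, hy'⟩) from hy)
          _ (by simp)
      · rw [dif_neg hx, dif_neg hy', dif_neg hx, dif_neg hz']
        exact proper_ev hc _ _ (by simp [hne])

/-- restriction to G₂, as a proper coloring -/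
noncomputable def restrict₂ [Fintype V₁] [Fintype V₂]
    (hcubic₁ : IsCubic G₁) (hcubic₂ : IsCubic G₂)
    (c : {c : (YJoin G₁ G₂ v₁ v₂ f).edgeSet → Fin 3 //
      IsProper3EdgeColoring (YJoin G₁ G₂ v₁ v₂ f) c}) :
    {c : G₂.edgeSet → Fin 3 // IsProper3EdgeColoring G₂ c} :=
  ⟨mkCol (d2 G₁ G₂ v₁ v₂ f c.1) (d2_symm G₁ G₂ v₁ v₂ f c.1),
    mkCol_proper _ _ (d2_proper G₁ G₂ v₁ v₂ f hcubic₁ hcubic₂ c.2)⟩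

lemma ev_restrict₂_ne [Fintype V₁] [Fintype V₂]
    (hcubic₁ : IsCubic G₁) (hcubic₂ : IsCubic G₂) (c) {x y : V₂} (h : G₂.Adj x y)
    (hx : x ≠ v₂) (hy : y ≠ v₂) :
    ev (restrict₂ G₁ G₂ v₁ v₂ f hcubic₁ hcubic₂ c).1 h =
      ev c.1 (show (YJoin G₁ G₂ v₁ v₂ f).Adj (Sum.inr ⟨x, hx⟩) (Sum.inr ⟨y, hy⟩) from h) := by
  show ev (mkCol (d2 G₁ G₂ v₁ v₂ f c.1) (d2_symm G₁ G₂ v₁ v₂ f c.1)) h = _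
  rw [ev_mkCol]
  unfold d2
  rw [dif_neg hx, dif_neg hy]

lemma ev_restrict₂_v₂ [Fintype V₁] [Fintype V₂]
    (hcubic₁ : IsCubic G₁) (hcubic₂ : IsCubic G₂) (c) {y : V₂} (h : G₂.Adj v₂ y) :
    ev (restrict₂ G₁ G₂ v₁ v₂ f hcubic₁ hcubic₂ c).1 h =
      kap G₁ G₂ v₁ v₂ f c.1 (f.symm ⟨y, h⟩) := by
  show ev (mkCol (d2 G₁ G₂ v₁ v₂ f c.1) (d2_symm G₁ G₂ v₁ v₂ f c.1)) h = _
  rw [ev_mkCol]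
  unfold d2
  rw [dif_pos rfl]

end YJP
namespace YJP

open SimpleGraph

variable {V₁ V₂ : Type} (G₁ : SimpleGraph V₁) (G₂ : SimpleGraph V₂)
  (v₁ : V₁) (v₂ : V₂) (f : G₁.neighborSet v₁ ≃ G₂.neighborSet v₂)

/-- the glued coloring data on the Y-join -/
def dY (c₁ : G₁.edgeSet → Fin 3) (c₂ : G₂.edgeSet → Fin 3) :
    ∀ ⦃p q : {x : V₁ // x ≠ v₁} ⊕ {y : V₂ // y ≠ v₂}⦄,
      (YJoin G₁ G₂ v₁ v₂ f).Adj p q → Fin 3 := fun p q h =>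
  match p, q, h with
  | Sum.inl a, Sum.inl b, h => ev c₁ (h : G₁.Adj a.1 b.1)
  | Sum.inl a, Sum.inr _, h => ev c₁ (h.elim (fun hm _ => G₁.adj_symm hm) : G₁.Adj a.1 v₁)
  | Sum.inr _, Sum.inl a, h => ev c₁ (h.elim (fun hm _ => G₁.adj_symm hm) : G₁.Adj a.1 v₁)
  | Sum.inr a, Sum.inr b, h => ev c₂ (h : G₂.Adj a.1 b.1)

lemma dY_symm (c₁ : G₁.edgeSet → Fin 3) (c₂ : G₂.edgeSet → Fin 3) :
    ∀ ⦃p q⦄ (h : (YJoin G₁ G₂ v₁ v₂ f).Adj p q),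
      dY G₁ G₂ v₁ v₂ f c₁ c₂ h = dY G₁ G₂ v₁ v₂ f c₁ c₂ h.symm := by
  rintro (a | a) (b | b) h
  · exact ev_congr c₁ _ _ (Sym2.eq_swap)
  · rfl
  · rfl
  · exact ev_congr c₂ _ _ (Sym2.eq_swap)

lemma dY_proper {c₁ : G₁.edgeSet → Fin 3} {c₂ : G₂.edgeSet → Fin 3}
    (hc₁ : IsProper3EdgeColoring G₁ c₁) (hc₂ : IsProper3EdgeColoring G₂ c₂)
    (hcompat : ∀ u : G₁.neighborSet v₁,
      ev c₁ (u.2 : G₁.Adj v₁ u.1) = ev c₂ ((f u).2 : G₂.Adj v₂ (f u : V₂))) :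
    ∀ ⦃p q r⦄ (hq : (YJoin G₁ G₂ v₁ v₂ f).Adj p q) (hr : (YJoin G₁ G₂ v₁ v₂ f).Adj p r),
      q ≠ r → dY G₁ G₂ v₁ v₂ f c₁ c₂ hq ≠ dY G₁ G₂ v₁ v₂ f c₁ c₂ hr := by
  rintro (a | a) (b | b) (b' | b') hq hr hne
  · -- inl, inl, inl
    exact proper_ev hc₁ (hq : G₁.Adj a.1 b.1) (hr : G₁.Adj a.1 b'.1)
      (fun h => hne (congrArg Sum.inl (Subtype.ext h)))
  · -- inl, inl, inr : internal vs cut at (inl a)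
    exact proper_ev hc₁ (hq : G₁.Adj a.1 b.1) (hr.elim (fun hm _ => G₁.adj_symm hm)) b.2
  · -- inl, inr, inl
    exact proper_ev hc₁ (hq.elim (fun hm _ => G₁.adj_symm hm)) (hr : G₁.Adj a.1 b'.1)
      (fun h => b'.2 h.symm)
  · -- inl, inr, inr : two cut edges from same left vertex — impossible
    exfalso
    obtain ⟨hm, hv⟩ := hq
    obtain ⟨hm', hv'⟩ := hr
    apply hne
    congr 1
    apply Subtype.ext
    rw [← hv, ← hv']
  · -- inr, inl, inl : two cut edges into same right vertex — impossible
    exfalso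
    obtain ⟨hm, hv⟩ := hq
    obtain ⟨hm', hv'⟩ := hr
    have h5 : (⟨b.1, hm⟩ : G₁.neighborSet v₁) = ⟨b'.1, hm'⟩ :=
      f.injective (Subtype.ext (hv.trans hv'.symm))
    exact hne (congrArg Sum.inl (Subtype.ext (congrArg (Subtype.val : G₁.neighborSet v₁ → V₁) h5)))
  · -- inr, inl, inr : cut vs internal at (inr a)
    obtain ⟨hm, hv⟩ := hq
    have hA : G₂.Adj a.1 v₂ := by
      have h2 := (f ⟨b.1, hm⟩).2
      rw [hv] at h2
      exact G₂.adj_symm h2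
    have step1 : dY G₁ G₂ v₁ v₂ f c₁ c₂ (p := Sum.inr a) (q := Sum.inl b) ⟨hm, hv⟩
        = ev c₁ (hm : G₁.Adj v₁ b.1) :=
      ev_congr c₁ _ _ Sym2.eq_swap
    have e1 : dY G₁ G₂ v₁ v₂ f c₁ c₂ (p := Sum.inr a) (q := Sum.inl b) ⟨hm, hv⟩
        = ev c₂ hA :=
      step1.trans ((hcompat ⟨b.1, hm⟩).trans
        (ev_congr c₂ _ _ (by rw [hv]; exact Sym2.eq_swap)))
    rw [e1]
    exact proper_ev hc₂ hA (hr : G₂.Adj a.1 b'.1) (fun h => b'.2 h.symm)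
  · -- inr, inr, inl : internal vs cut at (inr a)
    obtain ⟨hm, hv⟩ := hr
    have hA : G₂.Adj a.1 v₂ := by
      have h2 := (f ⟨b'.1, hm⟩).2
      rw [hv] at h2
      exact G₂.adj_symm h2
    have step1 : dY G₁ G₂ v₁ v₂ f c₁ c₂ (p := Sum.inr a) (q := Sum.inl b') ⟨hm, hv⟩
        = ev c₁ (hm : G₁.Adj v₁ b'.1) :=
      ev_congr c₁ _ _ Sym2.eq_swap
    have e1 : dY G₁ G₂ v₁ v₂ f c₁ c₂ (p := Sum.inr a) (q := Sum.inl b') ⟨hm, hv⟩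
        = ev c₂ hA :=
      step1.trans ((hcompat ⟨b'.1, hm⟩).trans
        (ev_congr c₂ _ _ (by rw [hv]; exact Sym2.eq_swap)))
    rw [e1]
    exact proper_ev hc₂ (hq : G₂.Adj a.1 b.1) hA b.2
  · -- inr, inr, inr
    exact proper_ev hc₂ (hq : G₂.Adj a.1 b.1) (hr : G₂.Adj a.1 b'.1)
      (fun h => hne (congrArg Sum.inr (Subtype.ext h)))
end YJP
namespace YJP

open SimpleGraph

variable {V₁ V₂ : Type} (G₁ : SimpleGraph V₁) (G₂ : SimpleGraph V₂)
  (v₁ : V₁) (v₂ : V₂) (f : G₁.neighborSet v₁ ≃ G₂.neighborSet v₂)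

/-- glue two compatible colorings -/
noncomputable def glue {c₁ : G₁.edgeSet → Fin 3} {c₂ : G₂.edgeSet → Fin 3}
    (hc₁ : IsProper3EdgeColoring G₁ c₁) (hc₂ : IsProper3EdgeColoring G₂ c₂)
    (hcompat : ∀ u : G₁.neighborSet v₁,
      ev c₁ (u.2 : G₁.Adj v₁ u.1) = ev c₂ ((f u).2 : G₂.Adj v₂ (f u : V₂))) :
    {c : (YJoin G₁ G₂ v₁ v₂ f).edgeSet → Fin 3 //
      IsProper3EdgeColoring (YJoin G₁ G₂ v₁ v₂ f) c} :=
  ⟨mkCol (dY G₁ G₂ v₁ v₂ f c₁ c₂) (dY_symm G₁ G₂ v₁ v₂ f c₁ c₂),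
    mkCol_proper _ _ (dY_proper G₁ G₂ v₁ v₂ f hc₁ hc₂ hcompat)⟩

lemma kap_surjective [Fintype V₁] [Fintype V₂]
    (hcubic₁ : IsCubic G₁) (hcubic₂ : IsCubic G₂)
    {c : (YJoin G₁ G₂ v₁ v₂ f).edgeSet → Fin 3}
    (hc : IsProper3EdgeColoring (YJoin G₁ G₂ v₁ v₂ f) c) :
    Function.Surjective (kap G₁ G₂ v₁ v₂ f c) := by
  have hcard : Nat.card (G₁.neighborSet v₁) = Nat.card (Fin 3) := by
    rw [Nat.card_coe_set_eq, hcubic₁ v₁, Nat.card_eq_fintype_card, Fintype.card_fin]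
  exact ((Nat.bijective_iff_injective_and_card _).mpr
    ⟨kap_injective G₁ G₂ v₁ v₂ f hcubic₁ hcubic₂ hc, hcard⟩).surjective

lemma sigma_kap [Fintype V₁] [Fintype V₂]
    (hcubic₁ : IsCubic G₁) (hcubic₂ : IsCubic G₂) (σ : Equiv.Perm (Fin 3))
    (c c' : {c : (YJoin G₁ G₂ v₁ v₂ f).edgeSet → Fin 3 //
      IsProper3EdgeColoring (YJoin G₁ G₂ v₁ v₂ f) c})
    (hσ : ∀ e, σ ((restrict₁ G₁ G₂ v₁ v₂ f hcubic₁ hcubic₂ c).1 e)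
      = (restrict₁ G₁ G₂ v₁ v₂ f hcubic₁ hcubic₂ c').1 e)
    (u : G₁.neighborSet v₁) :
    σ (kap G₁ G₂ v₁ v₂ f c.1 u) = kap G₁ G₂ v₁ v₂ f c'.1 u := by
  have h0 := hσ ⟨s(v₁, u.1), (u.2 : G₁.Adj v₁ u.1)⟩
  rw [show (restrict₁ G₁ G₂ v₁ v₂ f hcubic₁ hcubic₂ c).1 ⟨s(v₁, u.1), u.2⟩
      = kap G₁ G₂ v₁ v₂ f c.1 ⟨u.1, u.2⟩ from
        ev_restrict₁_v₁ G₁ G₂ v₁ v₂ f hcubic₁ hcubic₂ c u.2,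
    show (restrict₁ G₁ G₂ v₁ v₂ f hcubic₁ hcubic₂ c').1 ⟨s(v₁, u.1), u.2⟩
      = kap G₁ G₂ v₁ v₂ f c'.1 ⟨u.1, u.2⟩ from
        ev_restrict₁_v₁ G₁ G₂ v₁ v₂ f hcubic₁ hcubic₂ c' u.2] at h0
  exact h0

lemma tau_kap [Fintype V₁] [Fintype V₂]
    (hcubic₁ : IsCubic G₁) (hcubic₂ : IsCubic G₂) (τ : Equiv.Perm (Fin 3))
    (c c' : {c : (YJoin G₁ G₂ v₁ v₂ f).edgeSet → Fin 3 //
      IsProper3EdgeColoring (YJoin G₁ G₂ v₁ v₂ f) c})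
    (hτ : ∀ e, τ ((restrict₂ G₁ G₂ v₁ v₂ f hcubic₁ hcubic₂ c).1 e)
      = (restrict₂ G₁ G₂ v₁ v₂ f hcubic₁ hcubic₂ c').1 e)
    (u : G₁.neighborSet v₁) :
    τ (kap G₁ G₂ v₁ v₂ f c.1 u) = kap G₁ G₂ v₁ v₂ f c'.1 u := by
  have h0 := hτ ⟨s(v₂, (f u : V₂)), ((f u).2 : G₂.Adj v₂ (f u : V₂))⟩
  rw [show (restrict₂ G₁ G₂ v₁ v₂ f hcubic₁ hcubic₂ c).1 ⟨s(v₂, (f u : V₂)), (f u).2⟩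
      = kap G₁ G₂ v₁ v₂ f c.1 (f.symm ⟨(f u : V₂), (f u).2⟩) from
        ev_restrict₂_v₂ G₁ G₂ v₁ v₂ f hcubic₁ hcubic₂ c (f u).2,
    show (restrict₂ G₁ G₂ v₁ v₂ f hcubic₁ hcubic₂ c').1 ⟨s(v₂, (f u : V₂)), (f u).2⟩
      = kap G₁ G₂ v₁ v₂ f c'.1 (f.symm ⟨(f u : V₂), (f u).2⟩) from
        ev_restrict₂_v₂ G₁ G₂ v₁ v₂ f hcubic₁ hcubic₂ c' (f u).2,
    show f.symm ⟨(f u : V₂), (f u).2⟩ = u from f.symm_apply_apply u] at h0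
  exact h0

lemma ev_eq_kap {c : (YJoin G₁ G₂ v₁ v₂ f).edgeSet → Fin 3}
    {a : {x : V₁ // x ≠ v₁}} {b : {y : V₂ // y ≠ v₂}}
    (hm : a.1 ∈ G₁.neighborSet v₁) (hv : (f ⟨a.1, hm⟩ : V₂) = b.1)
    (h : (YJoin G₁ G₂ v₁ v₂ f).Adj (Sum.inl a) (Sum.inr b)) :
    ev c h = kap G₁ G₂ v₁ v₂ f c ⟨a.1, hm⟩ := by
  refine (ev_congr c h (cut_adj G₁ G₂ v₁ v₂ f ⟨a.1, hm⟩) ?_).symm.symm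
  rw [show b = bR G₂ v₂ (f ⟨a.1, hm⟩) from Subtype.ext hv.symm]
  rfl
end YJP
namespace YJP

open SimpleGraph

variable {V₁ V₂ : Type} (G₁ : SimpleGraph V₁) (G₂ : SimpleGraph V₂)
  (v₁ : V₁) (v₂ : V₂) (f : G₁.neighborSet v₁ ≃ G₂.neighborSet v₂)

lemma ev_restrict₁_v₁' [Fintype V₁] [Fintype V₂]
    (hcubic₁ : IsCubic G₁) (hcubic₂ : IsCubic G₂) (c) {x : V₁} (h : G₁.Adj x v₁) :
    ev (restrict₁ G₁ G₂ v₁ v₂ f hcubic₁ hcubic₂ c).1 h =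
      kap G₁ G₂ v₁ v₂ f c.1 ⟨x, h.symm⟩ :=
  (ev_congr _ h h.symm Sym2.eq_swap).trans
    (ev_restrict₁_v₁ G₁ G₂ v₁ v₂ f hcubic₁ hcubic₂ c h.symm)

lemma ev_restrict₂_v₂' [Fintype V₁] [Fintype V₂]
    (hcubic₁ : IsCubic G₁) (hcubic₂ : IsCubic G₂) (c) {y : V₂} (h : G₂.Adj y v₂) :
    ev (restrict₂ G₁ G₂ v₁ v₂ f hcubic₁ hcubic₂ c).1 h =
      kap G₁ G₂ v₁ v₂ f c.1 (f.symm ⟨y, h.symm⟩) :=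
  (ev_congr _ h h.symm Sym2.eq_swap).trans
    (ev_restrict₂_v₂ G₁ G₂ v₁ v₂ f hcubic₁ hcubic₂ c h.symm)

lemma ev_eq_kap' {c : (YJoin G₁ G₂ v₁ v₂ f).edgeSet → Fin 3}
    {a : {x : V₁ // x ≠ v₁}} {b : {y : V₂ // y ≠ v₂}}
    (hm : a.1 ∈ G₁.neighborSet v₁) (hv : (f ⟨a.1, hm⟩ : V₂) = b.1)
    (h : (YJoin G₁ G₂ v₁ v₂ f).Adj (Sum.inr b) (Sum.inl a)) :
    ev c h = kap G₁ G₂ v₁ v₂ f c ⟨a.1, hm⟩ :=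
  (ev_congr c h h.symm Sym2.eq_swap).trans (ev_eq_kap G₁ G₂ v₁ v₂ f hm hv h.symm)

lemma kap_glue {c₁ : G₁.edgeSet → Fin 3} {c₂ : G₂.edgeSet → Fin 3}
    (hc₁ : IsProper3EdgeColoring G₁ c₁) (hc₂ : IsProper3EdgeColoring G₂ c₂)
    (hcompat : ∀ u : G₁.neighborSet v₁,
      ev c₁ (u.2 : G₁.Adj v₁ u.1) = ev c₂ ((f u).2 : G₂.Adj v₂ (f u : V₂)))
    (u : G₁.neighborSet v₁) :
    kap G₁ G₂ v₁ v₂ f (glue G₁ G₂ v₁ v₂ f hc₁ hc₂ hcompat).1 u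
      = ev c₁ (u.2 : G₁.Adj v₁ u.1) := by
  show ev (mkCol (dY G₁ G₂ v₁ v₂ f c₁ c₂) (dY_symm G₁ G₂ v₁ v₂ f c₁ c₂))
    (cut_adj G₁ G₂ v₁ v₂ f u) = _
  rw [ev_mkCol]
  exact ev_congr c₁ _ _ Sym2.eq_swap

end YJP
open YJP in
/-- if `G₁` has exactly `a₁` and `G₂` exactly `a₂` proper 3-edge colorings
up to permutation of the colors, then their Y-join has exactly `a₁ * a₂` proper 3-edge
colorings up to permutation of the colors. -/
theorem yjoin_coloring_count {V₁ V₂ : Type} [Fintype V₁] [Fintype V₂]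
    (G₁ : SimpleGraph V₁) (G₂ : SimpleGraph V₂)
    (hcubic₁ : IsCubic G₁) (hcubic₂ : IsCubic G₂)
    (v₁ : V₁) (v₂ : V₂) (f : G₁.neighborSet v₁ ≃ G₂.neighborSet v₂)
    (a₁ a₂ : ℕ)
    (h₁ : Nat.card (Quotient (edgeColoringSetoid G₁)) = a₁)
    (h₂ : Nat.card (Quotient (edgeColoringSetoid G₂)) = a₂) :
    Nat.card (Quotient (edgeColoringSetoid (YJoin G₁ G₂ v₁ v₂ f))) = a₁ * a₂ := by
  classical
  subst h₁
  subst h₂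
  rw [← Nat.card_prod]
  -- the map on colorings
  refine Nat.card_eq_of_bijective (Quotient.lift
    (fun c => (Quotient.mk (edgeColoringSetoid G₁)
        (restrict₁ G₁ G₂ v₁ v₂ f hcubic₁ hcubic₂ c),
      Quotient.mk (edgeColoringSetoid G₂)
        (restrict₂ G₁ G₂ v₁ v₂ f hcubic₁ hcubic₂ c))) ?_) ⟨?_, ?_⟩
  · -- respects the relation
    intro c c' hcc
    obtain ⟨σ, hσ⟩ := hcc
    have hr1 : ∀ e, σ ((restrict₁ G₁ G₂ v₁ v₂ f hcubic₁ hcubic₂ c).1 e)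
        = (restrict₁ G₁ G₂ v₁ v₂ f hcubic₁ hcubic₂ c').1 e := by
      apply col_rel_of_ev
      intro x y hxy
      by_cases hx : x = v₁
      · obtain rfl := hx.symm
        rw [ev_restrict₁_v₁ G₁ G₂ v₁ v₂ f hcubic₁ hcubic₂ c hxy,
          ev_restrict₁_v₁ G₁ G₂ v₁ v₂ f hcubic₁ hcubic₂ c' hxy]
        exact hσ _
      · by_cases hy : y = v₁
        · obtain rfl := hy.symm
          rw [ev_restrict₁_v₁' G₁ G₂ v₁ v₂ f hcubic₁ hcubic₂ c hxy,
            ev_restrict₁_v₁' G₁ G₂ v₁ v₂ f hcubic₁ hcubic₂ c' hxy]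
          exact hσ _
        · rw [ev_restrict₁_ne G₁ G₂ v₁ v₂ f hcubic₁ hcubic₂ c hxy hx hy,
            ev_restrict₁_ne G₁ G₂ v₁ v₂ f hcubic₁ hcubic₂ c' hxy hx hy]
          exact hσ _
    have hr2 : ∀ e, σ ((restrict₂ G₁ G₂ v₁ v₂ f hcubic₁ hcubic₂ c).1 e)
        = (restrict₂ G₁ G₂ v₁ v₂ f hcubic₁ hcubic₂ c').1 e := by
      apply col_rel_of_ev
      intro x y hxy
      by_cases hx : x = v₂
      · obtain rfl := hx.symm
        rw [ev_restrict₂_v₂ G₁ G₂ v₁ v₂ f hcubic₁ hcubic₂ c hxy,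
          ev_restrict₂_v₂ G₁ G₂ v₁ v₂ f hcubic₁ hcubic₂ c' hxy]
        exact hσ _
      · by_cases hy : y = v₂
        · obtain rfl := hy.symm
          rw [ev_restrict₂_v₂' G₁ G₂ v₁ v₂ f hcubic₁ hcubic₂ c hxy,
            ev_restrict₂_v₂' G₁ G₂ v₁ v₂ f hcubic₁ hcubic₂ c' hxy]
          exact hσ _
        · rw [ev_restrict₂_ne G₁ G₂ v₁ v₂ f hcubic₁ hcubic₂ c hxy hx hy,
            ev_restrict₂_ne G₁ G₂ v₁ v₂ f hcubic₁ hcubic₂ c' hxy hx hy]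
          exact hσ _
    exact Prod.ext (Quotient.sound ⟨σ, hr1⟩) (Quotient.sound ⟨σ, hr2⟩)
  · -- injective
    intro q q'
    refine Quotient.inductionOn₂ q q' ?_
    intro c c' hEq
    simp only [Quotient.lift_mk, Prod.mk.injEq] at hEq
    obtain ⟨h1, h2⟩ := hEq
    obtain ⟨σ, hσ⟩ := Quotient.exact h1
    obtain ⟨τ, hτ⟩ := Quotient.exact h2
    have hσk := sigma_kap G₁ G₂ v₁ v₂ f hcubic₁ hcubic₂ σ c c' hσ
    have hτk := tau_kap G₁ G₂ v₁ v₂ f hcubic₁ hcubic₂ τ c c' hτ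
    have hστ : σ = τ := by
      apply Equiv.ext
      intro k
      obtain ⟨u, rfl⟩ := kap_surjective G₁ G₂ v₁ v₂ f hcubic₁ hcubic₂ c.2 k
      rw [hσk u]
      exact (hτk u).symm
    apply Quotient.sound
    refine ⟨σ, col_rel_of_ev σ ?_⟩
    rintro (a | a) (b | b) hxy
    · -- inl a, inl b
      have hxy' : G₁.Adj a.1 b.1 := hxy
      exact ((congrArg σ
          (ev_restrict₁_ne G₁ G₂ v₁ v₂ f hcubic₁ hcubic₂ c hxy' a.2 b.2).symm).trans
        (hσ ⟨s(a.1, b.1), hxy'⟩)).trans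
        (ev_restrict₁_ne G₁ G₂ v₁ v₂ f hcubic₁ hcubic₂ c' hxy' a.2 b.2)
    · -- inl a, inr b : cut edge
      obtain ⟨hm, hv⟩ := hxy
      exact ((congrArg σ (ev_eq_kap G₁ G₂ v₁ v₂ f hm hv ⟨hm, hv⟩)).trans
        (hσk ⟨a.1, hm⟩)).trans (ev_eq_kap G₁ G₂ v₁ v₂ f hm hv ⟨hm, hv⟩).symm
    · -- inr b, inl a : cut edge
      obtain ⟨hm, hv⟩ := hxy
      exact ((congrArg σ (ev_eq_kap' G₁ G₂ v₁ v₂ f hm hv ⟨hm, hv⟩)).trans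
        (hσk ⟨b.1, hm⟩)).trans (ev_eq_kap' G₁ G₂ v₁ v₂ f hm hv ⟨hm, hv⟩).symm
    · -- inr a, inr b
      rw [hστ]
      have hxy' : G₂.Adj a.1 b.1 := hxy
      exact ((congrArg τ
          (ev_restrict₂_ne G₁ G₂ v₁ v₂ f hcubic₁ hcubic₂ c hxy' a.2 b.2).symm).trans
        (hτ ⟨s(a.1, b.1), hxy'⟩)).trans
        (ev_restrict₂_ne G₁ G₂ v₁ v₂ f hcubic₁ hcubic₂ c' hxy' a.2 b.2)
  · -- surjective
    rintro ⟨q₁, q₂⟩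
    obtain ⟨c₁, rfl⟩ := Quotient.exists_rep q₁
    obtain ⟨c₂, rfl⟩ := Quotient.exists_rep q₂
    have hb₁ : Function.Bijective (colorAt c₁.1 v₁) := colorAt_bijective c₁.2 (hcubic₁ v₁)
    have hb₂ : Function.Bijective ((colorAt c₂.1 v₂) ∘ f) :=
      (colorAt_bijective c₂.2 (hcubic₂ v₂)).comp f.bijective
    set σ : Equiv.Perm (Fin 3) :=
      (Equiv.ofBijective _ hb₂).symm.trans (Equiv.ofBijective _ hb₁) with hσdef
    have hσc : ∀ u, σ (colorAt c₂.1 v₂ (f u)) = colorAt c₁.1 v₁ u := by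
      intro u
      rw [hσdef]
      show (Equiv.ofBijective _ hb₁) ((Equiv.ofBijective _ hb₂).symm
        ((colorAt c₂.1 v₂ ∘ f) u)) = _
      rw [show (colorAt c₂.1 v₂ ∘ f) u = (Equiv.ofBijective _ hb₂) u from rfl,
        Equiv.symm_apply_apply]
      rfl
    have hcompat : ∀ u : G₁.neighborSet v₁,
        ev c₁.1 (u.2 : G₁.Adj v₁ u.1)
          = ev (fun e => σ (c₂.1 e)) ((f u).2 : G₂.Adj v₂ (f u : V₂)) :=
      fun u => (hσc u).symm
    refine ⟨Quotient.mk _ (glue G₁ G₂ v₁ v₂ f c₁.2 (proper_perm c₂.2 σ) hcompat), ?_⟩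
    rw [Quotient.lift_mk]
    refine Prod.ext ?_ ?_
    · -- first component : restriction equals c₁ on the nose
      apply congrArg (Quotient.mk (edgeColoringSetoid G₁))
      apply Subtype.ext
      apply col_eq_of_ev
      intro x y hxy
      by_cases hx : x = v₁
      · obtain rfl := hx.symm
        rw [ev_restrict₁_v₁ G₁ G₂ v₁ v₂ f hcubic₁ hcubic₂ _ hxy,
          kap_glue G₁ G₂ v₁ v₂ f c₁.2 (proper_perm c₂.2 σ) hcompat ⟨y, hxy⟩]
      · by_cases hy : y = v₁
        · obtain rfl := hy.symm
          rw [ev_restrict₁_v₁' G₁ G₂ v₁ v₂ f hcubic₁ hcubic₂ _ hxy,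
            kap_glue G₁ G₂ v₁ v₂ f c₁.2 (proper_perm c₂.2 σ) hcompat ⟨x, hxy.symm⟩]
          exact ev_congr c₁.1 _ _ Sym2.eq_swap
        · rw [ev_restrict₁_ne G₁ G₂ v₁ v₂ f hcubic₁ hcubic₂ _ hxy hx hy]
          exact ev_mkCol (dY G₁ G₂ v₁ v₂ f c₁.1 (fun e => σ (c₂.1 e)))
            (dY_symm G₁ G₂ v₁ v₂ f c₁.1 (fun e => σ (c₂.1 e))) _
    · -- second component : restriction equals σ ∘ c₂, which is equivalent to c₂
      have hres : restrict₂ G₁ G₂ v₁ v₂ f hcubic₁ hcubic₂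
          (glue G₁ G₂ v₁ v₂ f c₁.2 (proper_perm c₂.2 σ) hcompat)
          = ⟨fun e => σ (c₂.1 e), proper_perm c₂.2 σ⟩ := by
        apply Subtype.ext
        apply col_eq_of_ev
        intro x y hxy
        by_cases hx : x = v₂
        · obtain rfl := hx.symm
          rw [ev_restrict₂_v₂ G₁ G₂ v₁ v₂ f hcubic₁ hcubic₂ _ hxy,
            kap_glue G₁ G₂ v₁ v₂ f c₁.2 (proper_perm c₂.2 σ) hcompat (f.symm ⟨y, hxy⟩)]
          refine (hcompat (f.symm ⟨y, hxy⟩)).trans ?_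
          refine ev_congr _ _ _ ?_
          rw [show ((f (f.symm ⟨y, hxy⟩)) : V₂) = y from
            congrArg Subtype.val (f.apply_symm_apply ⟨y, hxy⟩)]
        · by_cases hy : y = v₂
          · obtain rfl := hy.symm
            rw [ev_restrict₂_v₂' G₁ G₂ v₁ v₂ f hcubic₁ hcubic₂ _ hxy,
              kap_glue G₁ G₂ v₁ v₂ f c₁.2 (proper_perm c₂.2 σ) hcompat
                (f.symm ⟨x, hxy.symm⟩)]
            refine (hcompat (f.symm ⟨x, hxy.symm⟩)).trans ?_
            refine ev_congr _ _ _ ?_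
            rw [show ((f (f.symm ⟨x, hxy.symm⟩)) : V₂) = x from
              congrArg Subtype.val (f.apply_symm_apply ⟨x, hxy.symm⟩), Sym2.eq_swap]
          · rw [ev_restrict₂_ne G₁ G₂ v₁ v₂ f hcubic₁ hcubic₂ _ hxy hx hy]
            exact ev_mkCol (dY G₁ G₂ v₁ v₂ f c₁.1 (fun e => σ (c₂.1 e)))
              (dY_symm G₁ G₂ v₁ v₂ f c₁.1 (fun e => σ (c₂.1 e))) _
      rw [hres]
      exact Quotient.sound ⟨σ.symm, fun e => σ.symm_apply_apply _⟩
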